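/- For ν ≥ 1, the function ρ(ℓ) = e^(-ℓ)·(1/Σ(ν+1,ν+1))·Σ_{i=1}^{ν+1} Σ(ν-i+2, ν+1)·ℓ^(i-1)/(i-1)!, with Σ(i,j) = C(i+j-2, i-1)/2^(i+j-1), satisfies ρ''(0) = 1/(1-2ν). -/

import Mathlib

noncomputable def Sig (i j : ℕ) : ℝ :=
  (Nat.choose (i + j - 2) (i - 1) : ℝ) / 2 ^ (i + j - 1)

noncomputable def ρ (ν : ℕ) (ℓ : ℝ) : ℝ :=
  Real.exp (-ℓ) * (1 / Sig (ν + 1) (ν + 1)) *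
    ∑ i ∈ Finset.Icc 1 (ν + 1),
      Sig (ν + 2 - i) (ν + 1) * ℓ ^ (i - 1) / (Nat.factorial (i - 1) : ℝ)

noncomputable def coef (ν : ℕ) (k : ℕ) : ℝ :=
  if k ≤ ν then Sig (ν + 1 - k) (ν + 1) / Sig (ν + 1) (ν + 1) else 0

lemma exp_poly_deriv (N : ℕ) (c : ℕ → ℝ) (hc : ∀ k, N ≤ k → c k = 0) :
    deriv (fun x => Real.exp (-x) * ∑ k ∈ Finset.range N, c k * x ^ k / (Nat.factorial k : ℝ))
      = fun x => Real.exp (-x) * ∑ k ∈ Finset.range N, (c (k+1) - c k) * x ^ k / (Nat.factorial k : ℝ) := by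
  funext x
  have hexp : HasDerivAt (fun x : ℝ => Real.exp (-x)) (-Real.exp (-x)) x := by
    simpa [Function.comp_def] using (Real.hasDerivAt_exp (-x)).comp x (hasDerivAt_neg x)
  have hS : HasDerivAt (fun x : ℝ => ∑ k ∈ Finset.range N, c k * x ^ k / (Nat.factorial k : ℝ))
      (∑ k ∈ Finset.range N, c k * ((k : ℝ) * x ^ (k-1)) / (Nat.factorial k : ℝ)) x := by
    apply HasDerivAt.fun_sum
    intro k _
    exact ((hasDerivAt_pow k x).const_mul (c k)).div_const _
  have hshift : (∑ k ∈ Finset.range N, c k * ((k : ℝ) * x ^ (k-1)) / (Nat.factorial k : ℝ))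
      = ∑ k ∈ Finset.range N, c (k+1) * x ^ k / (Nat.factorial k : ℝ) := by
    cases N with
    | zero => simp
    | succ n =>
      rw [Finset.sum_range_succ' (fun k => c k * ((k : ℝ) * x ^ (k-1)) / (Nat.factorial k : ℝ)) n,
        Finset.sum_range_succ, hc (n+1) le_rfl]
      simp only [Nat.cast_zero, zero_mul, mul_zero, zero_div, add_zero, zero_mul, zero_div]
      apply Finset.sum_congr rfl
      intro k _
      have hfac : ((k+1).factorial : ℝ) = (k+1) * (Nat.factorial k : ℝ) := by
        push_cast [Nat.factorial_succ]; ring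
      have hk : ((k:ℝ)+1) ≠ 0 := by positivity
      have hk2 : (Nat.factorial k : ℝ) ≠ 0 := by
        exact_mod_cast Nat.factorial_ne_zero k
      simp only [Nat.add_sub_cancel, hfac]
      push_cast
      field_simp
  rw [(hexp.fun_mul hS).deriv, hshift]
  rw [show (∑ k ∈ Finset.range N, (c (k+1) - c k) * x ^ k / (Nat.factorial k : ℝ))
      = (∑ k ∈ Finset.range N, c (k+1) * x ^ k / (Nat.factorial k : ℝ))
        - ∑ k ∈ Finset.range N, c k * x ^ k / (Nat.factorial k : ℝ) by
    rw [← Finset.sum_sub_distrib]; apply Finset.sum_congr rfl; intros; ring]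
  ring

lemma rho_eq (ν : ℕ) :
    ρ ν = fun x => Real.exp (-x) * ∑ k ∈ Finset.range (ν+3),
      coef ν k * x ^ k / (Nat.factorial k : ℝ) := by
  funext x
  unfold ρ coef
  have key : ∀ (f : ℕ → ℝ), ∑ i ∈ Finset.Icc 1 (ν+1), f i = ∑ k ∈ Finset.range (ν+1), f (k+1) := by
    intro f
    rw [← Finset.Ico_add_one_right_eq_Icc, Finset.sum_Ico_eq_sum_range]
    simp [add_comm]
  have hsum : ∑ k ∈ Finset.range (ν+3),
      (if k ≤ ν then Sig (ν + 1 - k) (ν + 1) / Sig (ν + 1) (ν + 1) else 0) * x ^ k / (Nat.factorial k : ℝ)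
      = ∑ k ∈ Finset.range (ν+1),
        (Sig (ν + 1 - k) (ν + 1) / Sig (ν + 1) (ν + 1)) * x ^ k / (Nat.factorial k : ℝ) := by
    rw [show ν+3 = (ν+1)+1+1 from rfl, Finset.sum_range_succ, Finset.sum_range_succ]
    rw [if_neg (by omega), if_neg (by omega)]
    simp only [zero_mul, zero_div, add_zero]
    apply Finset.sum_congr rfl
    intro k hk
    simp only [Finset.mem_range] at hk
    rw [if_pos (by omega : k ≤ ν)]
  rw [hsum, key, Finset.mul_sum, Finset.mul_sum]
  apply Finset.sum_congr rfl
  intro k hk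
  simp only [Finset.mem_range] at hk
  have h2 : k + 1 - 1 = k := by omega
  have h3 : ν + 2 - (k + 1) = ν + 1 - k := by omega
  rw [h2, h3]
  ring

lemma coef_arith (m : ℕ) :
    coef (m+2) 2 - 2 * coef (m+2) 1 + coef (m+2) 0 = 1 / (1 - 2 * ((m + 2 : ℕ) : ℝ)) := by
  have hDpos : 0 < Sig (m + 2 + 1) (m + 2 + 1) := by
    unfold Sig
    apply div_pos _ (by positivity)
    exact_mod_cast Nat.choose_pos (by omega)
  unfold coef
  rw [if_pos (by omega), if_pos (by omega), if_pos (by omega)]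
  rw [show m + 2 + 1 - 0 = m + 2 + 1 from rfl, div_self (ne_of_gt hDpos)]
  have e1 : Sig (m + 2 + 1 - 2) (m + 2 + 1) = (Nat.choose (2*m+2) m : ℝ) / 2 ^ (2*m+3) := by
    show (Nat.choose (m+1 + (m+3) - 2) (m+1-1) : ℝ) / 2 ^ (m+1+(m+3)-1) = _
    rw [show m+1+(m+3)-2 = 2*m+2 by omega, show m+1-1 = m by omega, show m+1+(m+3)-1 = 2*m+3 by omega]
  have e2 : Sig (m + 2 + 1 - 1) (m + 2 + 1) = (Nat.choose (2*m+3) (m+1) : ℝ) / 2 ^ (2*m+4) := by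
    show (Nat.choose (m+2 + (m+3) - 2) (m+2-1) : ℝ) / 2 ^ (m+2+(m+3)-1) = _
    rw [show m+2+(m+3)-2 = 2*m+3 by omega, show m+2-1 = m+1 by omega, show m+2+(m+3)-1 = 2*m+4 by omega]
  have e3 : Sig (m + 2 + 1) (m + 2 + 1) = (Nat.choose (2*m+4) (m+2) : ℝ) / 2 ^ (2*m+5) := by
    show (Nat.choose (m+3 + (m+3) - 2) (m+3-1) : ℝ) / 2 ^ (m+3+(m+3)-1) = _
    rw [show m+3+(m+3)-2 = 2*m+4 by omega, show m+3-1 = m+2 by omega, show m+3+(m+3)-1 = 2*m+5 by omega]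
  rw [e1, e2, e3]
  have hsymm : (2*m+3).choose (m+1+1) = (2*m+3).choose (m+1) := by
    rw [← Nat.choose_symm (by omega : m+1+1 ≤ 2*m+3)]; congr 1; omega
  have hd : Nat.choose (2*m+4) (m+2) = 2 * Nat.choose (2*m+3) (m+1) := by
    rw [show 2*m+4 = (2*m+3)+1 by ring, show m+2 = (m+1)+1 from rfl,
      Nat.choose_succ_succ, hsymm]
    omega
  have hb : (2*m+3) * Nat.choose (2*m+2) m = Nat.choose (2*m+3) (m+1) * (m+1) := by
    have := Nat.add_one_mul_choose_eq (2*m+2) m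
    simpa [Nat.succ_eq_add_one] using this
  have hbpos : 0 < Nat.choose (2*m+3) (m+1) := Nat.choose_pos (by omega)
  have hdR : (Nat.choose (2*m+4) (m+2) : ℝ) = 2 * Nat.choose (2*m+3) (m+1) := by exact_mod_cast hd
  have hbR : (2*(m:ℝ)+3) * Nat.choose (2*m+2) m = (Nat.choose (2*m+3) (m+1) : ℝ) * ((m:ℝ)+1) := by
    exact_mod_cast hb
  have hbne : (Nat.choose (2*m+3) (m+1) : ℝ) ≠ 0 := by positivity
  have hP : (2:ℝ) ^ (2*m+3) ≠ 0 := by positivity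
  have hp5 : (2:ℝ) ^ (2*m+5) = 4 * 2 ^ (2*m+3) := by
    rw [show 2*m+5 = (2*m+3)+2 by ring, pow_add]; ring
  have hp4 : (2:ℝ) ^ (2*m+4) = 2 * 2 ^ (2*m+3) := by
    rw [show 2*m+4 = (2*m+3)+1 by ring, pow_add]; ring
  rw [hdR, hp5, hp4]
  have g1 : ((Nat.choose (2*m+2) m : ℝ) / 2^(2*m+3)) / (2 * (Nat.choose (2*m+3) (m+1) : ℝ) / (4 * 2^(2*m+3)))
      = 2 * (Nat.choose (2*m+2) m : ℝ) / (Nat.choose (2*m+3) (m+1) : ℝ) := by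
    field_simp; ring
  have g2 : ((Nat.choose (2*m+3) (m+1) : ℝ) / (2 * 2^(2*m+3))) / (2 * (Nat.choose (2*m+3) (m+1) : ℝ) / (4 * 2^(2*m+3)))
      = 1 := by
    field_simp; ring
  rw [g1, g2]
  have hden : (1 - 2 * (((m:ℝ) + 2))) ≠ 0 := by
    intro h; nlinarith [Nat.cast_nonneg (α := ℝ) m]
  push_cast
  field_simp
  linear_combination (-2:ℝ) * hbR

theorem stmt_10 (ν : ℕ) (hν : 1 ≤ ν) :
    deriv (deriv (ρ ν)) 0 = 1 / (1 - 2 * (ν : ℝ)) := by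
  have hc : ∀ k, ν + 3 ≤ k → coef ν k = 0 := by
    intro k hk; unfold coef; rw [if_neg (by omega)]
  have hc1 : ∀ k, ν + 3 ≤ k → (coef ν (k+1) - coef ν k) = 0 := by
    intro k hk; rw [hc k hk, hc (k+1) (by omega)]; ring
  rw [rho_eq ν, exp_poly_deriv (ν+3) (coef ν) hc,
    exp_poly_deriv (ν+3) (fun k => coef ν (k+1) - coef ν k) hc1]
  have hval : (∑ k ∈ Finset.range (ν+3),
      ((fun k => coef ν (k+1) - coef ν k) (k+1) - (fun k => coef ν (k+1) - coef ν k) k) * (0:ℝ) ^ k / (Nat.factorial k : ℝ))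
      = coef ν 2 - 2 * coef ν 1 + coef ν 0 := by
    rw [Finset.sum_eq_single_of_mem 0 (by simp)]
    · simp; ring
    · intro b _ hb
      rw [zero_pow hb, mul_zero, zero_div]
  simp only
  rw [neg_zero, Real.exp_zero, one_mul, hval]
  rcases Nat.lt_or_ge ν 2 with h | h
  · interval_cases ν
    norm_num [coef, Sig]
  · obtain ⟨m, rfl⟩ : ∃ m, ν = m + 2 := ⟨ν - 2, by omega⟩
    exact coef_arith m
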